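/- Let A, B be K×K Hermitian matrices with A positive semidefinite and B positive definite. Then for every 2×K complex matrix X with X B X† invertible, det(I + X A X† (X B X†)^{−1}) ≤ (1+λ₁)(1+λ₂), where λ₁ ≥ λ₂ are the two largest eigenvalues of B^{−1/2} A B^{−1/2}. -/

import Mathlib

open Matrix
open scoped ComplexOrder

/-- The square root of a positive semidefinite matrix, as defined in the older Mathlib
(removed since). -/
noncomputable def Matrix.PosSemidef.sqrt {n : Type*} [Fintype n] [DecidableEq n]
    {𝕜 : Type*} [RCLike 𝕜] {A : Matrix n n 𝕜} (hA : A.PosSemidef) : Matrix n n 𝕜 :=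
  hA.1.eigenvectorUnitary.1 * diagonal ((↑) ∘ (√·) ∘ hA.1.eigenvalues) *
    (star hA.1.eigenvectorUnitary : Matrix n n 𝕜)

lemma Matrix.PosSemidef.posSemidef_sqrt {n : Type*} [Fintype n] [DecidableEq n]
    {𝕜 : Type*} [RCLike 𝕜] {A : Matrix n n 𝕜} (hA : A.PosSemidef) : hA.sqrt.PosSemidef := by
  unfold Matrix.PosSemidef.sqrt
  have hd : (diagonal (((↑) : ℝ → 𝕜) ∘ (√·) ∘ hA.1.eigenvalues)).PosSemidef := by
    refine posSemidef_diagonal_iff.mpr fun i => ?_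
    simp [Real.sqrt_nonneg]
  exact hd.mul_mul_conjTranspose_same (hA.1.eigenvectorUnitary : Matrix n n 𝕜)

lemma Matrix.PosSemidef.sqrt_mul_self {n : Type*} [Fintype n] [DecidableEq n]
    {𝕜 : Type*} [RCLike 𝕜] {A : Matrix n n 𝕜} (hA : A.PosSemidef) : hA.sqrt * hA.sqrt = A := by
  unfold Matrix.PosSemidef.sqrt
  have hU : (star hA.1.eigenvectorUnitary : Matrix n n 𝕜) * hA.1.eigenvectorUnitary.1 = 1 :=
    Unitary.coe_star_mul_self _
  have hD : diagonal (((↑) : ℝ → 𝕜) ∘ (√·) ∘ hA.1.eigenvalues)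
      * diagonal (((↑) : ℝ → 𝕜) ∘ (√·) ∘ hA.1.eigenvalues)
      = diagonal (RCLike.ofReal ∘ hA.1.eigenvalues) := by
    rw [diagonal_mul_diagonal]
    congr 1
    funext i
    simp only [Function.comp_apply, ← RCLike.ofReal_mul,
      Real.mul_self_sqrt (hA.eigenvalues_nonneg i)]
  conv_rhs => rw [hA.1.spectral_theorem, Unitary.conjStarAlgAut_apply]
  set U := hA.1.eigenvectorUnitary.1
  set D := diagonal (((↑) : ℝ → 𝕜) ∘ (√·) ∘ hA.1.eigenvalues)
  set V := (star hA.1.eigenvectorUnitary : Matrix n n 𝕜)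
  have h : U * D * V * (U * D * V) = U * (D * (V * U) * D) * V := by
    simp only [Matrix.mul_assoc]
  rw [h, hU, Matrix.mul_one, hD]

section AuxLemmas

/-- Determinant bound for a 2×2 positive semidefinite matrix whose quadratic form is
bounded by `b` everywhere and by `c` on some nonzero vector. -/
lemma det_bound_aux (D : Matrix (Fin 2) (Fin 2) ℂ) (hD : D.PosSemidef)
    (b c : ℝ)
    (hb : ∀ v : Fin 2 → ℂ, star v ⬝ᵥ (D *ᵥ v) ≤ (b : ℂ) * (star v ⬝ᵥ v))
    (w : Fin 2 → ℂ) (hw : w ≠ 0)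
    (hc : star w ⬝ᵥ (D *ᵥ w) ≤ (c : ℂ) * (star w ⬝ᵥ w)) :
    (D.det).re ≤ b * c := by
  set w' : Fin 2 → ℂ := ![-(starRingEnd ℂ) (w 1), (starRingEnd ℂ) (w 0)] with hw'
  have hn_eq : star w' ⬝ᵥ w' = star w ⬝ᵥ w := by
    simp [hw', dotProduct, Fin.sum_univ_two, Pi.star_apply]
    ring
  have key : (star w ⬝ᵥ (D *ᵥ w)) * (star w' ⬝ᵥ (D *ᵥ w'))
      - (star w ⬝ᵥ (D *ᵥ w')) * (star w' ⬝ᵥ (D *ᵥ w))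
      = (star w ⬝ᵥ w) ^ 2 * D.det := by
    simp [hw', dotProduct, mulVec, Fin.sum_univ_two, Matrix.det_fin_two, Pi.star_apply]
    ring
  have hcross : star w' ⬝ᵥ (D *ᵥ w) = (starRingEnd ℂ) (star w ⬝ᵥ (D *ᵥ w')) := by
    rw [star_dotProduct, star_mulVec, dotProduct_mulVec]
    rw [hD.1]
    rfl
  set n := star w ⬝ᵥ w with hn
  have hn_nonneg : 0 ≤ n := dotProduct_star_self_nonneg w
  have hn_ne : n ≠ 0 := fun h => hw (dotProduct_star_self_eq_zero.mp h)
  have hn_re_pos : 0 < n.re := by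
    rcases Complex.nonneg_iff.mp hn_nonneg with ⟨h1, h2⟩
    rcases lt_or_eq_of_le h1 with h | h
    · exact h
    · exact absurd (Complex.ext h.symm h2.symm) hn_ne
  have hn_real : n = (n.re : ℂ) := by
    rcases Complex.nonneg_iff.mp hn_nonneg with ⟨_, h2⟩
    exact Complex.ext rfl h2.symm
  set q1 := star w ⬝ᵥ (D *ᵥ w) with hq1
  set q2 := star w' ⬝ᵥ (D *ᵥ w') with hq2
  have hq1_nonneg : 0 ≤ q1 := hD.dotProduct_mulVec_nonneg w
  have hq2_nonneg : 0 ≤ q2 := hD.dotProduct_mulVec_nonneg w'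
  have hq1_real : q1 = (q1.re : ℂ) := by
    rcases Complex.nonneg_iff.mp hq1_nonneg with ⟨_, h2⟩
    exact Complex.ext rfl h2.symm
  have hq2_real : q2 = (q2.re : ℂ) := by
    rcases Complex.nonneg_iff.mp hq2_nonneg with ⟨_, h2⟩
    exact Complex.ext rfl h2.symm
  have hq1_re_nonneg : 0 ≤ q1.re := (Complex.nonneg_iff.mp hq1_nonneg).1
  have hq2_re_nonneg : 0 ≤ q2.re := (Complex.nonneg_iff.mp hq2_nonneg).1
  have hq1_le : q1.re ≤ c * n.re := by
    have h := (Complex.le_def.mp hc).1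
    rw [hn_real] at h
    rw [Complex.re_ofReal_mul, Complex.ofReal_re] at h
    exact h
  have hq2_le : q2.re ≤ b * n.re := by
    have h0 := hb w'
    rw [hn_eq] at h0
    have h := (Complex.le_def.mp h0).1
    rw [hn_real] at h
    rw [Complex.re_ofReal_mul, Complex.ofReal_re] at h
    exact h
  have key_re : q1.re * q2.re - Complex.normSq (star w ⬝ᵥ (D *ᵥ w'))
      = n.re ^ 2 * D.det.re := by
    have h2 : (star w ⬝ᵥ (D *ᵥ w')) * (star w' ⬝ᵥ (D *ᵥ w))
        = (Complex.normSq (star w ⬝ᵥ (D *ᵥ w')) : ℂ) := by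
      rw [hcross, Complex.mul_conj]
    rw [h2, hq1_real, hq2_real, hn_real, ← Complex.ofReal_mul, ← Complex.ofReal_sub,
      ← Complex.ofReal_pow] at key
    have := congrArg Complex.re key
    simpa only [Complex.ofReal_re, Complex.re_ofReal_mul] using this
  have hfinal : n.re ^ 2 * D.det.re ≤ n.re ^ 2 * (b * c) := by
    rw [← key_re]
    have h1 : q1.re * q2.re ≤ (c * n.re) * (b * n.re) :=
      mul_le_mul hq1_le hq2_le hq2_re_nonneg (le_trans hq1_re_nonneg hq1_le)
    nlinarith [Complex.normSq_nonneg (star w ⬝ᵥ (D *ᵥ w'))]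
  exact le_of_mul_le_mul_left hfinal (by positivity)

variable {K : ℕ}

/-- Quadratic form of a Hermitian matrix via its spectral decomposition. -/
lemma quad_form_eq (C : Matrix (Fin K) (Fin K) ℂ) (hC : C.IsHermitian) (u : Fin K → ℂ) :
    star u ⬝ᵥ (C *ᵥ u) = ∑ k, (hC.eigenvalues k : ℂ) *
      (star (((hC.eigenvectorUnitary : Matrix (Fin K) (Fin K) ℂ)ᴴ *ᵥ u) k)
        * (((hC.eigenvectorUnitary : Matrix (Fin K) (Fin K) ℂ)ᴴ *ᵥ u) k)) := by
  set V := (hC.eigenvectorUnitary : Matrix (Fin K) (Fin K) ℂ) with hV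
  set y := Vᴴ *ᵥ u with hy
  conv_lhs => rw [hC.spectral_theorem, Unitary.conjStarAlgAut_apply]
  rw [← Matrix.star_eq_conjTranspose] at hy
  rw [← mulVec_mulVec, ← mulVec_mulVec, dotProduct_mulVec]
  have h1 : star u ᵥ* V = star y := by
    rw [hy, star_mulVec, Matrix.star_eq_conjTranspose, conjTranspose_conjTranspose]
  rw [h1, ← hy]
  simp only [dotProduct, mulVec_diagonal, Pi.star_apply, Function.comp_apply]
  refine Finset.sum_congr rfl fun k _ => ?_
  show star (y k) * (RCLike.ofReal (hC.eigenvalues k) * y k)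
      = (hC.eigenvalues k : ℂ) * (star (y k) * y k)
  have h2 : (RCLike.ofReal (hC.eigenvalues k) : ℂ) = ((hC.eigenvalues k : ℝ) : ℂ) := rfl
  rw [h2]
  ring

/-- Squared norm via the eigenvector unitary. -/
lemma norm_form_eq (C : Matrix (Fin K) (Fin K) ℂ) (hC : C.IsHermitian) (u : Fin K → ℂ) :
    star u ⬝ᵥ u = ∑ k,
      (star (((hC.eigenvectorUnitary : Matrix (Fin K) (Fin K) ℂ)ᴴ *ᵥ u) k)
        * (((hC.eigenvectorUnitary : Matrix (Fin K) (Fin K) ℂ)ᴴ *ᵥ u) k)) := by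
  set V := (hC.eigenvectorUnitary : Matrix (Fin K) (Fin K) ℂ) with hV
  set y := Vᴴ *ᵥ u with hy
  have hVV : V * star V = 1 := (Matrix.mem_unitaryGroup_iff).mp hC.eigenvectorUnitary.2
  have h0 : star u ⬝ᵥ u = star u ⬝ᵥ ((V * star V) *ᵥ u) := by rw [hVV, one_mulVec]
  rw [h0, ← mulVec_mulVec, dotProduct_mulVec]
  rw [← Matrix.star_eq_conjTranspose] at hy
  have h1 : star u ᵥ* V = star y := by
    rw [hy, star_mulVec, Matrix.star_eq_conjTranspose, conjTranspose_conjTranspose]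
  rw [h1, ← hy]
  simp [dotProduct]

end AuxLemmas

/-- Upper bound: for `A` Hermitian positive semidefinite and `B` Hermitian positive
definite, and any `2×K` matrix `X` with `X B Xᴴ` invertible,
`det (I + X A Xᴴ (X B Xᴴ)⁻¹) ≤ (1+λ₁)(1+λ₂)` where `λ₁ ≥ λ₂` are the two largest
eigenvalues of `B^{-1/2} A B^{-1/2}` (the determinant is real; we bound its real part). -/
theorem stmt_5 (K : ℕ) (A B : Matrix (Fin K) (Fin K) ℂ)
    (hA : A.PosSemidef) (hB : B.PosDef)
    (C : Matrix (Fin K) (Fin K) ℂ)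
    (hCdef : C = (hB.posSemidef.sqrt)⁻¹ * A * (hB.posSemidef.sqrt)⁻¹)
    (hC : C.IsHermitian) (l1 l2 : ℝ) (hord : l2 ≤ l1)
    (i j : Fin K) (hij : i ≠ j)
    (hi : hC.eigenvalues i = l1) (hj : hC.eigenvalues j = l2)
    (htop : ∀ k, k ≠ i → k ≠ j → hC.eigenvalues k ≤ l2)
    (X : Matrix (Fin 2) (Fin K) ℂ) (hX : IsUnit (X * B * Xᴴ).det) :
    (((1 : Matrix (Fin 2) (Fin 2) ℂ) + X * A * Xᴴ * (X * B * Xᴴ)⁻¹).det).re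
      ≤ (1 + l1) * (1 + l2) := by
  classical
  set S := hB.posSemidef.sqrt with hSdef
  have hS : S.PosSemidef := hB.posSemidef.posSemidef_sqrt
  have hSsq : S * S = B := hB.posSemidef.sqrt_mul_self
  have hSH : Sᴴ = S := hS.1
  have hBdet : IsUnit B.det := isUnit_iff_ne_zero.mpr hB.det_pos.ne'
  have hSdet : IsUnit S.det := by
    have h : S.det * S.det = B.det := by rw [← det_mul, hSsq]
    exact isUnit_of_mul_isUnit_left (h ▸ hBdet)
  have hSinv1 : S * S⁻¹ = 1 := mul_nonsing_inv S hSdet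
  have hSinv2 : S⁻¹ * S = 1 := nonsing_inv_mul S hSdet
  -- A = S C S
  have hAeq : S * C * S = A := by
    rw [hCdef]
    have h : S * (S⁻¹ * A * S⁻¹) * S = (S * S⁻¹) * A * (S⁻¹ * S) := by
      simp only [Matrix.mul_assoc]
    rw [h, hSinv1, hSinv2, one_mul, mul_one]
  -- C is psd
  have hCpsd : C.PosSemidef := by
    have h := hA.mul_mul_conjTranspose_same S⁻¹
    have hSiH : (S⁻¹)ᴴ = S⁻¹ := by rw [conjTranspose_nonsing_inv, hSH]
    rw [hSiH] at h
    rw [hCdef]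
    exact h
  set Y := X * S with hYdef
  have hYH : Yᴴ = S * Xᴴ := by rw [hYdef, conjTranspose_mul, hSH]
  have hN1 : X * B * Xᴴ = Y * Yᴴ := by
    rw [hYH, hYdef, ← hSsq]
    simp only [Matrix.mul_assoc]
  have hN2 : X * A * Xᴴ = Y * C * Yᴴ := by
    rw [hYH, hYdef, ← hAeq]
    simp only [Matrix.mul_assoc]
  have hNdet : IsUnit (Y * Yᴴ).det := hN1 ▸ hX
  have hNpsd : (Y * Yᴴ).PosSemidef := posSemidef_self_mul_conjTranspose Y
  set R := hNpsd.sqrt with hRdef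
  have hR : R.PosSemidef := hNpsd.posSemidef_sqrt
  have hRsq : R * R = Y * Yᴴ := hNpsd.sqrt_mul_self
  have hRH : Rᴴ = R := hR.1
  have hRdet : IsUnit R.det := by
    have h : R.det * R.det = (Y * Yᴴ).det := by rw [← det_mul, hRsq]
    exact isUnit_of_mul_isUnit_left (h ▸ hNdet)
  have hRinv1 : R * R⁻¹ = 1 := mul_nonsing_inv R hRdet
  have hRinv2 : R⁻¹ * R = 1 := nonsing_inv_mul R hRdet
  set T := R⁻¹ with hTdef
  have hTH : Tᴴ = T := by rw [hTdef, conjTranspose_nonsing_inv, hRH]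
  set Z := T * Y with hZdef
  have hZH : Zᴴ = Yᴴ * T := by rw [hZdef, conjTranspose_mul, hTH]
  have hZZ : Z * Zᴴ = 1 := by
    rw [hZdef, hZH]
    have h : T * Y * (Yᴴ * T) = T * (Y * Yᴴ) * T := by simp only [Matrix.mul_assoc]
    rw [h, ← hRsq]
    have h2 : T * (R * R) * T = (T * R) * (R * T) := by simp only [Matrix.mul_assoc]
    rw [h2, hTdef, hRinv2, hRinv1, one_mul]
  set D := Z * ((1 : Matrix (Fin K) (Fin K) ℂ) + C) * Zᴴ with hDdef
  -- determinant equality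
  have hdet : ((1 : Matrix (Fin 2) (Fin 2) ℂ) + X * A * Xᴴ * (X * B * Xᴴ)⁻¹).det = D.det := by
    rw [hN2, hN1]
    have hsplit : (1 : Matrix (Fin 2) (Fin 2) ℂ) + Y * C * Yᴴ * (Y * Yᴴ)⁻¹
        = (Y * ((1 : Matrix (Fin K) (Fin K) ℂ) + C) * Yᴴ) * (Y * Yᴴ)⁻¹ := by
      have h : Y * ((1 : Matrix (Fin K) (Fin K) ℂ) + C) * Yᴴ = Y * Yᴴ + Y * C * Yᴴ := by
        rw [Matrix.mul_add, Matrix.mul_one, Matrix.add_mul]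
      rw [h, Matrix.add_mul, mul_nonsing_inv _ hNdet]
    rw [hsplit, det_mul]
    have hDdet2 : D.det
        = (Y * ((1 : Matrix (Fin K) (Fin K) ℂ) + C) * Yᴴ).det * ((Y * Yᴴ)⁻¹).det := by
      have h : D = T * (Y * ((1 : Matrix (Fin K) (Fin K) ℂ) + C) * Yᴴ) * T := by
        rw [hDdef, hZdef, hZH]
        simp only [Matrix.mul_assoc]
      rw [h, det_mul, det_mul]
      have hTT : T.det * T.det = ((Y * Yᴴ)⁻¹).det := by
        rw [← det_mul, hTdef, ← Matrix.mul_inv_rev, hRsq]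
      rw [mul_comm (T.det) _, mul_assoc, hTT]
    rw [hDdet2]
  rw [hdet]
  -- positive semidefiniteness of D
  have h1Cpsd : ((1 : Matrix (Fin K) (Fin K) ℂ) + C).PosSemidef :=
    Matrix.PosSemidef.add Matrix.PosSemidef.one hCpsd
  have hDpsd : D.PosSemidef := by
    rw [hDdef]
    exact h1Cpsd.mul_mul_conjTranspose_same Z
  -- quadratic form transfer
  have hDq : ∀ v : Fin 2 → ℂ, star v ⬝ᵥ (D *ᵥ v)
      = star (Zᴴ *ᵥ v) ⬝ᵥ (((1 : Matrix (Fin K) (Fin K) ℂ) + C) *ᵥ (Zᴴ *ᵥ v)) := by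
    intro v
    rw [hDdef, ← mulVec_mulVec, ← mulVec_mulVec, dotProduct_mulVec]
    congr 1
    rw [star_mulVec, conjTranspose_conjTranspose]
  have hZn : ∀ v : Fin 2 → ℂ, star (Zᴴ *ᵥ v) ⬝ᵥ (Zᴴ *ᵥ v) = star v ⬝ᵥ v := by
    intro v
    rw [star_mulVec, conjTranspose_conjTranspose, ← dotProduct_mulVec, mulVec_mulVec,
      hZZ, one_mulVec]
  -- eigenvalue bounds
  have heig1 : ∀ k, hC.eigenvalues k ≤ l1 := by
    intro k
    by_cases hk : k = i
    · rw [hk, hi]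
    · by_cases hk2 : k = j
      · rw [hk2, hj]; exact hord
      · exact (htop k hk hk2).trans hord
  have heig2 : ∀ k, k ≠ i → hC.eigenvalues k ≤ l2 := by
    intro k hk
    by_cases hk2 : k = j
    · rw [hk2, hj]
    · exact htop k hk hk2
  -- quadratic form bounds for C
  have hCb1 : ∀ u : Fin K → ℂ, star u ⬝ᵥ (C *ᵥ u) ≤ (l1 : ℂ) * (star u ⬝ᵥ u) := by
    intro u
    rw [quad_form_eq C hC u, norm_form_eq C hC u, Finset.mul_sum]
    refine Finset.sum_le_sum fun k _ => ?_
    refine mul_le_mul_of_nonneg_right ?_ (star_mul_self_nonneg _)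
    exact_mod_cast Complex.real_le_real.mpr (heig1 k)
  have hCb2 : ∀ u : Fin K → ℂ,
      star (fun k => (hC.eigenvectorUnitary : Matrix (Fin K) (Fin K) ℂ) k i) ⬝ᵥ u = 0 →
      star u ⬝ᵥ (C *ᵥ u) ≤ (l2 : ℂ) * (star u ⬝ᵥ u) := by
    intro u hcond
    have hyi : (((hC.eigenvectorUnitary : Matrix (Fin K) (Fin K) ℂ))ᴴ *ᵥ u) i = 0 := by
      rw [← hcond]
      simp [mulVec, dotProduct, conjTranspose_apply]
    rw [quad_form_eq C hC u, norm_form_eq C hC u, Finset.mul_sum]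
    refine Finset.sum_le_sum fun k _ => ?_
    by_cases hk : k = i
    · rw [hk, hyi]
      simp
    · refine mul_le_mul_of_nonneg_right ?_ (star_mul_self_nonneg _)
      exact_mod_cast Complex.real_le_real.mpr (heig2 k hk)
  -- bounds for 1 + C
  have h1C : ∀ (l : ℝ) (u : Fin K → ℂ), star u ⬝ᵥ (C *ᵥ u) ≤ (l : ℂ) * (star u ⬝ᵥ u) →
      star u ⬝ᵥ (((1 : Matrix (Fin K) (Fin K) ℂ) + C) *ᵥ u)
        ≤ ((1 + l : ℝ) : ℂ) * (star u ⬝ᵥ u) := by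
    intro l u hu
    rw [add_mulVec, one_mulVec, dotProduct_add]
    have harith : ((1 + l : ℝ) : ℂ) * (star u ⬝ᵥ u)
        = star u ⬝ᵥ u + (l : ℂ) * (star u ⬝ᵥ u) := by
      push_cast
      ring
    rw [harith]
    exact add_le_add_right hu _
  -- construct the special vector w
  set a := Z *ᵥ (fun k => (hC.eigenvectorUnitary : Matrix (Fin K) (Fin K) ℂ) k i) with hadef
  obtain ⟨w, hw0, hwa⟩ : ∃ w : Fin 2 → ℂ, w ≠ 0 ∧ star a ⬝ᵥ w = 0 := by
    by_cases ha : a = 0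
    · refine ⟨![1, 0], ?_, ?_⟩
      · intro h
        have := congrFun h 0
        simp at this
      · rw [ha]
        simp
    · refine ⟨![-(starRingEnd ℂ) (a 1), (starRingEnd ℂ) (a 0)], ?_, ?_⟩
      · intro h
        apply ha
        have h0 := congrFun h 0
        have h1 := congrFun h 1
        simp at h0 h1
        funext k
        fin_cases k
        · simpa using h1
        · simpa using h0
      · simp [dotProduct, Fin.sum_univ_two]
        ring
  have hcond : star (fun k => (hC.eigenvectorUnitary : Matrix (Fin K) (Fin K) ℂ) k i)
      ⬝ᵥ (Zᴴ *ᵥ w) = 0 := by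
    rw [dotProduct_mulVec, ← star_mulVec, ← hadef, hwa]
  -- apply the determinant bound
  have hb : ∀ v : Fin 2 → ℂ, star v ⬝ᵥ (D *ᵥ v)
      ≤ (((1 + l1 : ℝ)) : ℂ) * (star v ⬝ᵥ v) := by
    intro v
    rw [hDq v, ← hZn v]
    exact h1C l1 (Zᴴ *ᵥ v) (hCb1 (Zᴴ *ᵥ v))
  have hcw : star w ⬝ᵥ (D *ᵥ w) ≤ (((1 + l2 : ℝ)) : ℂ) * (star w ⬝ᵥ w) := by
    rw [hDq w, ← hZn w]
    exact h1C l2 (Zᴴ *ᵥ w) (hCb2 (Zᴴ *ᵥ w) hcond)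
  exact det_bound_aux D hDpsd (1 + l1) (1 + l2) hb w hw0 hcw
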